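/- Let G be a unimodular locally compact group with Haar measure μ acting transitively on a set S with compact open point stabilizers, let x, y ∈ S, and let G_x, G_y be their stabilizers. Then the number of elements in the G_x-orbit of y times μ(G_x ∩ G_y) equals μ(G_x), provided this orbit is finite; consequently |G_x · y| / μ(G_x) = |G_y · x| / μ(G_y) whenever both orbits are finite. -/

import Mathlib

open MeasureTheory Pointwise

lemma stabilizer_orbit_counting_aux
    {G : Type*} [Group G] [TopologicalSpace G] [IsTopologicalGroup G] [T2Space G]
    [MeasurableSpace G] [BorelSpace G]
    (μ : Measure G) [μ.IsHaarMeasure]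
    {S : Type*} [MulAction G S]
    (x y : S)
    (hNmeas : MeasurableSet
      ((MulAction.stabilizer G x ⊓ MulAction.stabilizer G y : Subgroup G) : Set G))
    (hfin : (MulAction.orbit (MulAction.stabilizer G x) y).Finite) :
    (Nat.card (MulAction.orbit (MulAction.stabilizer G x) y) : ENNReal) *
        μ ((MulAction.stabilizer G x ⊓ MulAction.stabilizer G y : Subgroup G) : Set G) =
        μ ((MulAction.stabilizer G x : Subgroup G) : Set G) := by
  classical
  set H := MulAction.stabilizer G x with hH
  set K := MulAction.stabilizer G y with hK
  set N : Set G := ((H ⊓ K : Subgroup G) : Set G) with hN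
  have hrep : ∀ z ∈ MulAction.orbit H y, ∃ g : G, g ∈ H ∧ g • y = z := by
    rintro z ⟨⟨g, hg⟩, rfl⟩
    exact ⟨g, hg, rfl⟩
  choose! rep hrepH hrepy using hrep
  have hcoset : ∀ z ∈ MulAction.orbit H y,
      {g : G | g ∈ H ∧ g • y = z} = rep z • N := by
    intro z hz
    ext g
    simp only [Set.mem_setOf_eq, Set.mem_smul_set_iff_inv_smul_mem, smul_eq_mul, hN,
      Subgroup.coe_inf, Set.mem_inter_iff, SetLike.mem_coe]
    constructor
    · rintro ⟨hgH, hgy⟩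
      refine ⟨mul_mem (inv_mem (hrepH z hz)) hgH, ?_⟩
      rw [hK, MulAction.mem_stabilizer_iff, mul_smul, hgy, inv_smul_eq_iff, hrepy z hz]
    · rintro ⟨hmem, hmemK⟩
      have h1 : g = rep z * ((rep z)⁻¹ * g) := by group
      constructor
      · rw [h1]; exact mul_mem (hrepH z hz) hmem
      · rw [h1, mul_smul]
        have : ((rep z)⁻¹ * g) • y = y := hmemK
        rw [this, hrepy z hz]
  have hunion : (H : Set G) = ⋃ z ∈ hfin.toFinset, rep z • N := by
    ext g
    simp only [Set.mem_iUnion, Set.Finite.mem_toFinset, SetLike.mem_coe]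
    constructor
    · intro hg
      refine ⟨g • y, ⟨⟨g, hg⟩, rfl⟩, ?_⟩
      rw [← hcoset (g • y) ⟨⟨g, hg⟩, rfl⟩]
      exact ⟨hg, rfl⟩
    · rintro ⟨z, hz, hgz⟩
      rw [← hcoset z hz] at hgz
      exact hgz.1
  have hdisj : (↑hfin.toFinset : Set S).PairwiseDisjoint (fun z => rep z • N) := by
    intro z hz w hw hzw
    simp only [Set.Finite.coe_toFinset] at hz hw
    refine Set.disjoint_left.2 fun g hgz hgw => hzw ?_
    have hgz' : g ∈ rep z • N := hgz
    have hgw' : g ∈ rep w • N := hgw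
    rw [← hcoset z hz] at hgz'
    rw [← hcoset w hw] at hgw'
    rw [← hgz'.2, hgw'.2]
  have hsmulmeas : ∀ z, MeasurableSet (rep z • N) := fun z =>
    hNmeas.const_smul (rep z)
  calc (Nat.card (MulAction.orbit H y) : ENNReal) * μ N
      = (hfin.toFinset.card : ENNReal) * μ N := by
        rw [Nat.card_coe_set_eq, Set.ncard_eq_toFinset_card _ hfin]
    _ = ∑ z ∈ hfin.toFinset, μ (rep z • N) := by
        rw [Finset.sum_congr rfl fun z _ => MeasureTheory.measure_smul μ (rep z) N, Finset.sum_const,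
          nsmul_eq_mul]
    _ = μ (⋃ z ∈ hfin.toFinset, rep z • N) :=
        (measure_biUnion_finset hdisj fun z _ => hsmulmeas z).symm
    _ = μ (H : Set G) := by rw [← hunion]

/-- For a unimodular locally compact group `G` acting transitively on a set `S` with
compact open point stabilizers: the number of elements in the `G_x`-orbit of `y` times
`μ(G_x ⊓ G_y)` equals `μ(G_x)` when the orbit is finite; consequently
`|G_x · y| / μ(G_x) = |G_y · x| / μ(G_y)` whenever both orbits are finite. -/
theorem stabilizer_orbit_counting
    {G : Type*} [Group G] [TopologicalSpace G] [IsTopologicalGroup G] [T2Space G]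
    [LocallyCompactSpace G] [MeasurableSpace G] [BorelSpace G]
    (μ : Measure G) [μ.IsHaarMeasure] [μ.IsMulRightInvariant]
    {S : Type*} [MulAction G S] [MulAction.IsPretransitive G S]
    (hstab : ∀ s : S, IsCompact ((MulAction.stabilizer G s : Subgroup G) : Set G) ∧
      IsOpen ((MulAction.stabilizer G s : Subgroup G) : Set G))
    (x y : S) :
    ((MulAction.orbit (MulAction.stabilizer G x) y).Finite →
      (Nat.card (MulAction.orbit (MulAction.stabilizer G x) y) : ENNReal) *
        μ ((MulAction.stabilizer G x ⊓ MulAction.stabilizer G y : Subgroup G) : Set G) =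
        μ ((MulAction.stabilizer G x : Subgroup G) : Set G)) ∧
    ((MulAction.orbit (MulAction.stabilizer G x) y).Finite →
      (MulAction.orbit (MulAction.stabilizer G y) x).Finite →
      (Nat.card (MulAction.orbit (MulAction.stabilizer G x) y) : ENNReal) /
        μ ((MulAction.stabilizer G x : Subgroup G) : Set G) =
      (Nat.card (MulAction.orbit (MulAction.stabilizer G y) x) : ENNReal) /
        μ ((MulAction.stabilizer G y : Subgroup G) : Set G)) := by
  classical
  have hNopen : IsOpen
      ((MulAction.stabilizer G x ⊓ MulAction.stabilizer G y : Subgroup G) : Set G) := by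
    rw [Subgroup.coe_inf]
    exact (hstab x).2.inter (hstab y).2
  have hNopen' : IsOpen
      ((MulAction.stabilizer G y ⊓ MulAction.stabilizer G x : Subgroup G) : Set G) := by
    rw [Subgroup.coe_inf]
    exact (hstab y).2.inter (hstab x).2
  refine ⟨stabilizer_orbit_counting_aux μ x y hNopen.measurableSet, fun hf hg => ?_⟩
  have h1 := stabilizer_orbit_counting_aux μ x y hNopen.measurableSet hf
  have h2 := stabilizer_orbit_counting_aux μ y x hNopen'.measurableSet hg
  have hsame : ((MulAction.stabilizer G y ⊓ MulAction.stabilizer G x : Subgroup G) : Set G)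
      = ((MulAction.stabilizer G x ⊓ MulAction.stabilizer G y : Subgroup G) : Set G) := by
    rw [inf_comm]
  rw [hsame] at h2
  set c := μ ((MulAction.stabilizer G x ⊓ MulAction.stabilizer G y : Subgroup G) : Set G)
    with hc
  have hc0 : c ≠ 0 := (hNopen.measure_pos μ ⟨1, one_mem _⟩).ne'
  have hctop : c ≠ ⊤ := by
    have : IsCompact ((MulAction.stabilizer G x ⊓ MulAction.stabilizer G y : Subgroup G)
        : Set G) := (hstab x).1.inter_right (Subgroup.isClosed_of_isOpen _ (hstab y).2)
    exact this.measure_lt_top.ne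
  have hn1 : (Nat.card (MulAction.orbit (MulAction.stabilizer G x) y) : ENNReal) ≠ 0 := by
    simp only [ne_eq, Nat.cast_eq_zero]
    have : Nonempty (MulAction.orbit (MulAction.stabilizer G x) y) :=
      ⟨⟨y, MulAction.mem_orbit_self y⟩⟩
    have : Finite (MulAction.orbit (MulAction.stabilizer G x) y) := hf
    exact Nat.card_ne_zero.2 ⟨‹_›, ‹_›⟩
  have hn2 : (Nat.card (MulAction.orbit (MulAction.stabilizer G y) x) : ENNReal) ≠ 0 := by
    simp only [ne_eq, Nat.cast_eq_zero]
    have : Nonempty (MulAction.orbit (MulAction.stabilizer G y) x) :=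
      ⟨⟨x, MulAction.mem_orbit_self x⟩⟩
    have : Finite (MulAction.orbit (MulAction.stabilizer G y) x) := hg
    exact Nat.card_ne_zero.2 ⟨‹_›, ‹_›⟩
  have hn1top : (Nat.card (MulAction.orbit (MulAction.stabilizer G x) y) : ENNReal) ≠ ⊤ :=
    ENNReal.natCast_ne_top _
  have hn2top : (Nat.card (MulAction.orbit (MulAction.stabilizer G y) x) : ENNReal) ≠ ⊤ :=
    ENNReal.natCast_ne_top _
  rw [← h1, ← h2]
  rw [ENNReal.div_eq_inv_mul, ENNReal.div_eq_inv_mul, ENNReal.mul_inv (Or.inl hn1) (Or.inl hn1top),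
    ENNReal.mul_inv (Or.inl hn2) (Or.inl hn2top)]
  rw [mul_comm ((Nat.card (MulAction.orbit (MulAction.stabilizer G x) y) : ENNReal))⁻¹ c⁻¹,
    mul_assoc, ENNReal.inv_mul_cancel hn1 hn1top,
    mul_comm ((Nat.card (MulAction.orbit (MulAction.stabilizer G y) x) : ENNReal))⁻¹ c⁻¹,
    mul_assoc, ENNReal.inv_mul_cancel hn2 hn2top]
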